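/- arXiv:2601.05691 — 2 statements merged into one kernel-verified Lean document; each statement's English description precedes it below -/
import Mathlib

section
/- Let (X, α) be a T_f-algebra and let φ := f₂^*(α) ∘ (χ₁)_{f_! X} ∘ f₁^*((η_f)_X) : f₁^* X ⟶ f₂^* X. Then φ satisfies the cocycle descent condition (DD2): π₁^*(φ) ∘ j_X ∘ π₂^*(φ) = (j₂)_X ∘ π^*(φ) ∘ (j₁⁻¹)_X, as morphisms π₂^*(f₁^* X) ⟶ π₁^*(f₂^* X). -/
open CategoryTheory

universe v' u' v u

namespace BRPaper

variable (C : Type u) [Category.{v} C] (E : C → Type u') [∀ A, Category.{v'} (E A)]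

/-- A cloven bifibration over `C`, modeled as a contravariant pseudofunctor `pull`
(with coherence isomorphisms `ι`, `κ` satisfying the pseudofunctor axioms)
together with chosen left adjoints `push f ⊣ pull f`. -/
structure ClovenBifib where
  pull : ∀ {B A : C}, (B ⟶ A) → (E A ⥤ E B)
  ι : ∀ B : C, 𝟭 (E B) ≅ pull (𝟙 B)
  κ : ∀ {X Y Z : C} (f : Y ⟶ Z) (g : X ⟶ Y), pull f ⋙ pull g ≅ pull (g ≫ f)
  push : ∀ {B A : C}, (B ⟶ A) → (E B ⥤ E A)
  adj : ∀ {B A : C} (f : B ⟶ A), push f ⊣ pull f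
  κ_id_left : ∀ {B A : C} (f : B ⟶ A),
    Functor.whiskerLeft (pull f) (ι B).hom ≫ (κ f (𝟙 B)).hom =
      eqToHom (by rw [Category.id_comp, Functor.comp_id])
  κ_id_right : ∀ {B A : C} (g : B ⟶ A),
    Functor.whiskerRight (ι A).hom (pull g) ≫ (κ (𝟙 A) g).hom =
      eqToHom (by rw [Category.comp_id, Functor.id_comp])
  κ_assoc : ∀ {X Y Z W : C} (f : Z ⟶ W) (g : Y ⟶ Z) (h : X ⟶ Y),
    Functor.whiskerRight (κ f g).hom (pull h) ≫ (κ (g ≫ f) h).hom =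
      Functor.whiskerLeft (pull f) (κ g h).hom ≫ (κ f (h ≫ g)).hom ≫
        eqToHom (by rw [Category.assoc])

variable {C E}
variable (P : ClovenBifib C E)

namespace ClovenBifib

/-- The mate of a 2-cell `θ : g^* ∘ e^* ⟶ k^* ∘ h^*`. -/
def mate {A₀ B₀ C₀ D₀ : C} {e : B₀ ⟶ A₀} {g : C₀ ⟶ B₀} {k : C₀ ⟶ D₀} {h : D₀ ⟶ A₀}
    (θ : P.pull e ⋙ P.pull g ⟶ P.pull h ⋙ P.pull k) :
    P.pull g ⋙ P.push k ⟶ P.push e ⋙ P.pull h :=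
  Functor.whiskerRight (P.adj e).unit (P.pull g ⋙ P.push k) ≫
    Functor.whiskerRight (Functor.whiskerLeft (P.push e) θ) (P.push k) ≫
    Functor.whiskerLeft (P.push e ⋙ P.pull h) (P.adj k).counit

/-- The two-fold mate of a 2-cell `θ : g^* ∘ e^* ⟶ k^* ∘ h^*`. -/
def twoMate {A₀ B₀ C₀ D₀ : C} {e : B₀ ⟶ A₀} {g : C₀ ⟶ B₀} {k : C₀ ⟶ D₀} {h : D₀ ⟶ A₀}
    (θ : P.pull e ⋙ P.pull g ⟶ P.pull h ⋙ P.pull k) :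
    P.push k ⋙ P.push h ⟶ P.push g ⋙ P.push e :=
  Functor.whiskerRight (P.adj g).unit (P.push k ⋙ P.push h) ≫
    Functor.whiskerRight (Functor.whiskerLeft (P.push g) (P.mate θ)) (P.push h) ≫
    Functor.whiskerLeft (P.push g ⋙ P.push e) (P.adj h).counit

/-- The Beck–Chevalley transformation of a commutative square `a ≫ d = c ≫ b`. -/
def BC {A₀ B₀ C₀ D₀ : C} (a : A₀ ⟶ B₀) (c : A₀ ⟶ C₀) (d : B₀ ⟶ D₀) (b : C₀ ⟶ D₀)
    (sq : a ≫ d = c ≫ b) :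
    P.pull a ⋙ P.push c ⟶ P.push d ⋙ P.pull b :=
  P.mate ((P.κ d a).hom ≫ eqToHom (by rw [sq]) ≫ (P.κ b c).inv)

/-- The Beck–Chevalley property: the Beck–Chevalley transformation of every
pullback square is an isomorphism. -/
def BCCond : Prop :=
  ∀ ⦃A₀ B₀ C₀ D₀ : C⦄ (a : A₀ ⟶ B₀) (c : A₀ ⟶ C₀) (d : B₀ ⟶ D₀) (b : C₀ ⟶ D₀)
    (sq : a ≫ d = c ≫ b), IsPullback a c d b → IsIso (P.BC a c d b sq)

/-- The inverse (backward) Beck–Chevalley transformation. -/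
noncomputable def BCinv {A₀ B₀ C₀ D₀ : C} (a : A₀ ⟶ B₀) (c : A₀ ⟶ C₀) (d : B₀ ⟶ D₀)
    (b : C₀ ⟶ D₀) (sq : a ≫ d = c ≫ b) (hiso : IsIso (P.BC a c d b sq)) :
    P.push d ⋙ P.pull b ⟶ P.pull a ⋙ P.push c :=
  @CategoryTheory.inv _ _ _ _ (P.BC a c d b sq) hiso

variable {A B : C}

/-- The canonical isomorphism `χ₁ : f₁^* ∘ f^* ≅ f₂^* ∘ f^*` for the kernel pair of `f`. -/
def chi1 (f : B ⟶ A) {BAB : C} (f₁ f₂ : BAB ⟶ B) (hf : f₁ ≫ f = f₂ ≫ f) :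
    P.pull f ⋙ P.pull f₁ ≅ P.pull f ⋙ P.pull f₂ :=
  P.κ f f₁ ≪≫ eqToIso (by rw [hf]) ≪≫ (P.κ f f₂).symm

/-- The canonical isomorphism `d_i : Id ≅ Δ^* ∘ f_i^*`. -/
def dIso {BAB : C} (fi : BAB ⟶ B) (Δ : B ⟶ BAB) (hΔ : Δ ≫ fi = 𝟙 B) :
    𝟭 (E B) ≅ P.pull fi ⋙ P.pull Δ :=
  P.ι B ≪≫ eqToIso (by rw [hΔ]) ≪≫ (P.κ fi Δ).symm

/-- The canonical isomorphism `j_i : π^* ∘ f_i^* ≅ π'^* ∘ f_i^*`. -/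
def jIso {BAB Q : C} (fi : BAB ⟶ B) (π π' : Q ⟶ BAB) (hπ : π ≫ fi = π' ≫ fi) :
    P.pull fi ⋙ P.pull π ≅ P.pull fi ⋙ P.pull π' :=
  P.κ fi π ≪≫ eqToIso (by rw [hπ]) ≪≫ (P.κ fi π').symm

/-- The canonical isomorphism `j : π₂^* ∘ f₂^* ≅ π₁^* ∘ f₁^*`. -/
def jCross {BAB Q : C} (f₁ f₂ : BAB ⟶ B) (π₁ π₂ : Q ⟶ BAB) (hππ : π₂ ≫ f₂ = π₁ ≫ f₁) :
    P.pull f₂ ⋙ P.pull π₂ ≅ P.pull f₁ ⋙ P.pull π₁ :=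
  P.κ f₂ π₂ ≪≫ eqToIso (by rw [hππ]) ≪≫ (P.κ f₁ π₁).symm

/-- Multiplication of the monad `T_f = f^* ∘ f_!`. -/
def Tmul (f : B ⟶ A) (X : E B) :
    (P.pull f).obj ((P.push f).obj ((P.pull f).obj ((P.push f).obj X))) ⟶
      (P.pull f).obj ((P.push f).obj X) :=
  (P.pull f).map ((P.adj f).counit.app ((P.push f).obj X))

/-- `φ := f₂^*(α) ∘ (χ₁)_{f_! X} ∘ f₁^*((η_f)_X)`. -/
def phi (f : B ⟶ A) {BAB : C} (f₁ f₂ : BAB ⟶ B) (hf : f₁ ≫ f = f₂ ≫ f)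
    (X : E B) (α : (P.pull f).obj ((P.push f).obj X) ⟶ X) :
    (P.pull f₁).obj X ⟶ (P.pull f₂).obj X :=
  (P.pull f₁).map ((P.adj f).unit.app X) ≫
    (P.chi1 f f₁ f₂ hf).hom.app ((P.push f).obj X) ≫ (P.pull f₂).map α

/-- `ψ := f₁^*(α) ∘ (χ₁⁻¹)_{f_! X} ∘ f₂^*((η_f)_X)`. -/
def psi (f : B ⟶ A) {BAB : C} (f₁ f₂ : BAB ⟶ B) (hf : f₁ ≫ f = f₂ ≫ f)
    (X : E B) (α : (P.pull f).obj ((P.push f).obj X) ⟶ X) :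
    (P.pull f₂).obj X ⟶ (P.pull f₁).obj X :=
  (P.pull f₂).map ((P.adj f).unit.app X) ≫
    (P.chi1 f f₁ f₂ hf).inv.app ((P.push f).obj X) ≫ (P.pull f₁).map α

/-- `β := (ε_{f₂})_X ∘ (f₂)_!(φ)`. -/
def betaMap {BAB : C} (f₁ f₂ : BAB ⟶ B) (X : E B)
    (φ : (P.pull f₁).obj X ⟶ (P.pull f₂).obj X) :
    (P.push f₂).obj ((P.pull f₁).obj X) ⟶ X :=
  (P.push f₂).map φ ≫ (P.adj f₂).counit.app X

/-- The unit `η'` of the monad `(f₂)_! ∘ f₁^*`. -/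
def eta' {BAB : C} (f₁ f₂ : BAB ⟶ B) (Δ : B ⟶ BAB)
    (hΔ₁ : Δ ≫ f₁ = 𝟙 B) (hΔ₂ : Δ ≫ f₂ = 𝟙 B) (X : E B) :
    X ⟶ (P.push f₂).obj ((P.pull f₁).obj X) :=
  (P.dIso f₁ Δ hΔ₁).hom.app X ≫
    (P.pull Δ).map ((P.adj f₂).unit.app ((P.pull f₁).obj X)) ≫
    (P.dIso f₂ Δ hΔ₂).inv.app ((P.push f₂).obj ((P.pull f₁).obj X))

/-- `k₂ : (f₂)_! ∘ (π₁)_! ⟶ (f₂)_! ∘ π_!`, the two-fold mate of `j₂`. -/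
def kTwo {BAB Q : C} (f₂ : BAB ⟶ B) (π π₁ : Q ⟶ BAB) (hπ₂ : π ≫ f₂ = π₁ ≫ f₂) :
    P.push π₁ ⋙ P.push f₂ ⟶ P.push π ⋙ P.push f₂ :=
  P.twoMate (P.jIso f₂ π π₁ hπ₂).hom

/-- The multiplication `μ'` of the monad `(f₂)_! ∘ f₁^*`. -/
noncomputable def mu' {BAB Q : C} (f₁ f₂ : BAB ⟶ B) (π₁ π₂ π : Q ⟶ BAB)
    (hππ : π₂ ≫ f₂ = π₁ ≫ f₁) (hπ₁ : π ≫ f₁ = π₂ ≫ f₁) (hπ₂ : π ≫ f₂ = π₁ ≫ f₂)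
    (hiso : IsIso (P.BC π₂ π₁ f₂ f₁ hππ)) (X : E B) :
    (P.push f₂).obj ((P.pull f₁).obj ((P.push f₂).obj ((P.pull f₁).obj X))) ⟶
      (P.push f₂).obj ((P.pull f₁).obj X) :=
  (P.push f₂).map ((P.BCinv π₂ π₁ f₂ f₁ hππ hiso).app ((P.pull f₁).obj X)) ≫
    (P.push f₂).map ((P.push π₁).map ((P.jIso f₁ π π₂ hπ₁).inv.app X)) ≫
    (P.kTwo f₂ π π₁ hπ₂).app ((P.pull π).obj ((P.pull f₁).obj X)) ≫
    (P.push f₂).map ((P.adj π).counit.app ((P.pull f₁).obj X))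

end ClovenBifib

end BRPaper

namespace BRPaper
namespace ClovenBifib

variable {C : Type u} [Category.{v} C] {E : C → Type u'} [∀ A, Category.{v'} (E A)]
  (P : ClovenBifib C E)

lemma kappa_assoc_app {X Y Z W : C} (f : Z ⟶ W) (g : Y ⟶ Z) (h : X ⟶ Y) (T : E W) :
    (P.pull h).map ((P.κ f g).hom.app T) ≫ (P.κ (g ≫ f) h).hom.app T =
      (P.κ g h).hom.app ((P.pull f).obj T) ≫ (P.κ f (h ≫ g)).hom.app T ≫
        eqToHom (by rw [Category.assoc]) := by
  have := congr_fun (congr_arg NatTrans.app (P.κ_assoc f g h)) T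
  simpa [eqToHom_app] using this

lemma kappa_conj {D R : C} {a b : D ⟶ R} (p : a = b) {Q : C} (w : Q ⟶ D) (T : E R) :
    (P.κ a w).inv.app T ≫ (P.pull w).map (eqToHom (by rw [p])) ≫ (P.κ b w).hom.app T =
      eqToHom (by rw [p]) := by
  subst p; simp

lemma pull_chi1_app {A B : C} (f : B ⟶ A) {D : C} (u v : D ⟶ B) (huv : u ≫ f = v ≫ f)
    {Q : C} (w : Q ⟶ D) (T : E A) :
    (P.pull w).map ((P.chi1 f u v huv).hom.app T) =
      (P.κ u w).hom.app ((P.pull f).obj T) ≫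
        (P.chi1 f (w ≫ u) (w ≫ v)
          (by rw [Category.assoc, Category.assoc, huv])).hom.app T ≫
        (P.κ v w).inv.app ((P.pull f).obj T) := by
  have hu := P.kappa_assoc_app f u w T
  have hv := P.kappa_assoc_app f v w T
  have hu' : (P.pull w).map ((P.κ f u).hom.app T) =
      (P.κ u w).hom.app ((P.pull f).obj T) ≫ (P.κ f (w ≫ u)).hom.app T ≫
        eqToHom (by rw [Category.assoc]) ≫ (P.κ (u ≫ f) w).inv.app T := by
    rw [← cancel_mono ((P.κ (u ≫ f) w).hom.app T)]
    simpa using hu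
  have hv' : (P.pull w).map ((P.κ f v).inv.app T) =
      (P.κ (v ≫ f) w).hom.app T ≫ eqToHom (by rw [Category.assoc]) ≫
        (P.κ f (w ≫ v)).inv.app T ≫ (P.κ v w).inv.app ((P.pull f).obj T) := by
    rw [← cancel_epi ((P.pull w).map ((P.κ f v).hom.app T)), ← Functor.map_comp]
    slice_rhs 1 2 => rw [hv]
    simp
  have hm := P.kappa_conj huv w T
  simp only [chi1, Iso.trans_hom, eqToIso.hom, NatTrans.comp_app, Iso.symm_hom,
    Functor.map_comp, hu', hv', eqToHom_app, eqToHom_map, Category.assoc]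
  slice_lhs 4 6 => rw [← eqToHom_map (P.pull w) (congrArg (fun g => (P.pull g).obj T) huv), hm]
  simp [eqToHom_app]

lemma pull_phi {A B : C} (f : B ⟶ A) {D : C} (u v : D ⟶ B) (huv : u ≫ f = v ≫ f)
    {Q : C} (w : Q ⟶ D) (X : E B) (α : (P.pull f).obj ((P.push f).obj X) ⟶ X) :
    (P.pull w).map (P.phi f u v huv X α) =
      (P.κ u w).hom.app X ≫
        P.phi f (w ≫ u) (w ≫ v) (by rw [Category.assoc, Category.assoc, huv]) X α ≫
        (P.κ v w).inv.app X := by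
  have n1 := (P.κ u w).hom.naturality ((P.adj f).unit.app X)
  simp only [Functor.comp_map, Functor.id_obj, Functor.comp_obj] at n1
  have n2 := (P.κ v w).inv.naturality α
  simp only [Functor.comp_map, Functor.id_obj, Functor.comp_obj] at n2
  simp only [phi, Functor.map_comp, P.pull_chi1_app f u v huv w, Category.assoc]
  slice_rhs 1 2 => rw [← n1]
  slice_rhs 4 5 => rw [n2]

lemma phi_congr {A B : C} (f : B ⟶ A) {D : C} {u v u' v' : D ⟶ B}
    (hu : u = u') (hv : v = v') (h : u ≫ f = v ≫ f)
    (X : E B) (α : (P.pull f).obj ((P.push f).obj X) ⟶ X) :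
    P.phi f u v h X α =
      eqToHom (by rw [hu]) ≫ P.phi f u' v' (by rw [← hu, ← hv]; exact h) X α ≫
        eqToHom (by rw [hv]) := by
  subst hu; subst hv; simp

lemma phi_trans {A B : C} (f : B ⟶ A) {D : C} (u m v : D ⟶ B)
    (h1 : u ≫ f = m ≫ f) (h2 : m ≫ f = v ≫ f)
    (X : E B) (α : (P.pull f).obj ((P.push f).obj X) ⟶ X)
    (hTA2 : P.Tmul f X ≫ α = (P.pull f).map ((P.push f).map α) ≫ α) :
    P.phi f u m h1 X α ≫ P.phi f m v h2 X α = P.phi f u v (h1.trans h2) X α := by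
  have nη := (P.adj f).unit.naturality α
  simp only [Functor.id_map, Functor.comp_map, Functor.id_obj, Functor.comp_obj] at nη
  have n2 := (P.chi1 f m v h2).hom.naturality ((P.push f).map α)
  simp only [Functor.comp_map, Functor.comp_obj] at n2
  have n3 := (P.chi1 f m v h2).hom.naturality ((P.adj f).counit.app ((P.push f).obj X))
  simp only [Functor.comp_map, Functor.comp_obj] at n3
  have hT : (P.pull f).map ((P.push f).map α) ≫ α =
      (P.pull f).map ((P.adj f).counit.app ((P.push f).obj X)) ≫ α := by
    rw [← hTA2]; rfl
  have tri : (P.adj f).unit.app ((P.pull f).obj ((P.push f).obj X)) ≫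
      (P.pull f).map ((P.adj f).counit.app ((P.push f).obj X)) = 𝟙 _ :=
    (P.adj f).right_triangle_components _
  have step6 : (P.chi1 f u m h1).hom.app ((P.push f).obj X) ≫
      (P.chi1 f m v h2).hom.app ((P.push f).obj X) =
      (P.chi1 f u v (h1.trans h2)).hom.app ((P.push f).obj X) := by
    simp [chi1, eqToHom_app, eqToHom_trans]
  simp only [phi, Category.assoc]
  slice_lhs 3 4 => rw [← Functor.map_comp, nη, Functor.map_comp]
  slice_lhs 4 5 => rw [n2]
  slice_lhs 5 6 => rw [← Functor.map_comp, hT, Functor.map_comp]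
  slice_lhs 4 5 => rw [← n3]
  slice_lhs 3 4 => rw [← Functor.map_comp, tri]
  simp only [Functor.id_obj, Functor.comp_obj]
  simp only [CategoryTheory.Functor.map_id, Category.id_comp, Category.comp_id]
  slice_lhs 2 3 => rw [step6]

end ClovenBifib
end BRPaper

open BRPaper ClovenBifib CategoryTheory

/-- For a `T_f`-algebra `(X, α)`, the morphism
`φ := f₂^*(α) ∘ (χ₁)_{f_! X} ∘ f₁^*((η_f)_X)` satisfies the cocycle descent
condition (DD2): `π₁^*(φ) ∘ j_X ∘ π₂^*(φ) = (j₂)_X ∘ π^*(φ) ∘ (j₁⁻¹)_X`. -/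
theorem benabou_roubaud_phi_DD2
    {C : Type u} [Category.{v} C] [Limits.HasPullbacks C]
    {E : C → Type u'} [∀ A, Category.{v'} (E A)] (P : ClovenBifib C E)
    {A B : C} (f : B ⟶ A) {BAB : C} (f₁ f₂ : BAB ⟶ B)
    (hf : f₁ ≫ f = f₂ ≫ f) (hkp : IsPullback f₁ f₂ f f)
    {Q : C} (π₁ π₂ : Q ⟶ BAB) (hππ : π₂ ≫ f₂ = π₁ ≫ f₁) (hpbQ : IsPullback π₂ π₁ f₂ f₁)
    (π : Q ⟶ BAB) (hπ₁ : π ≫ f₁ = π₂ ≫ f₁) (hπ₂ : π ≫ f₂ = π₁ ≫ f₂)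
    (X : E B) (α : (P.pull f).obj ((P.push f).obj X) ⟶ X)
    (hTA1 : (P.adj f).unit.app X ≫ α = 𝟙 X)
    (hTA2 : P.Tmul f X ≫ α = (P.pull f).map ((P.push f).map α) ≫ α) :
    (P.pull π₂).map (P.phi f f₁ f₂ hf X α) ≫
        (P.jCross f₁ f₂ π₁ π₂ hππ).hom.app X ≫
        (P.pull π₁).map (P.phi f f₁ f₂ hf X α) =
      (P.jIso f₁ π π₂ hπ₁).inv.app X ≫
        (P.pull π).map (P.phi f f₁ f₂ hf X α) ≫
        (P.jIso f₂ π π₁ hπ₂).hom.app X := by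
  rw [P.pull_phi f f₁ f₂ hf π₂ X α, P.pull_phi f f₁ f₂ hf π₁ X α,
    P.pull_phi f f₁ f₂ hf π X α, P.phi_congr f hπ₁ hπ₂, P.phi_congr f hππ.symm rfl]
  simp only [jCross, jIso, Iso.trans_hom, Iso.trans_inv, Iso.symm_hom, Iso.symm_inv,
    eqToIso.hom, eqToIso.inv, NatTrans.comp_app, eqToHom_app, Category.assoc,
    Iso.inv_hom_id_app_assoc, Iso.hom_inv_id_app_assoc, eqToHom_trans,
    eqToHom_refl, Category.id_comp, Category.comp_id, eqToHom_trans_assoc]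
  slice_lhs 2 3 => rw [P.phi_trans f (π₂ ≫ f₁) (π₂ ≫ f₂) (π₁ ≫ f₂) (by
    rw [Category.assoc, Category.assoc, hf]) (by
    rw [hππ, Category.assoc, Category.assoc, hf]) X α hTA2]
end

section
/- Assume the Beck–Chevalley property. Let (X, β) be an action of Eq(f) on p (so β : (f₂)_!(f₁^* X) ⟶ X satisfies (AC1) and (AC2)). Define α := β ∘ (BC₁⁻¹)_X : f^*(f_! X) ⟶ X. Then α satisfies the algebra unit axiom (TA1): α ∘ (η_f)_X = id_X. -/
open CategoryTheory

universe v' u' v u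

open BRPaper ClovenBifib CategoryTheory

theorem kappa_congr {C : Type u} [Category.{v} C] {E : C → Type u'} [∀ A, Category.{v'} (E A)]
    (P : ClovenBifib C E) {X₀ Y₀ Z₀ : C} {u v : Y₀ ⟶ Z₀} (h : u = v) (g : X₀ ⟶ Y₀)
    (W : E Z₀) :
    (P.κ u g).hom.app W =
      eqToHom (by rw [h]) ≫ (P.κ v g).hom.app W ≫ eqToHom (by rw [h]) := by
  subst h; simp

theorem kappa_congr2 {C : Type u} [Category.{v} C] {E : C → Type u'} [∀ A, Category.{v'} (E A)]
    (P : ClovenBifib C E) {X₀ Y₀ Z₀ : C} {u v : X₀ ⟶ Y₀} (h : u = v) (g : Y₀ ⟶ Z₀)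
    (W : E Z₀) :
    (P.κ g u).hom.app W =
      eqToHom (by rw [h]) ≫ (P.κ g v).hom.app W ≫ eqToHom (by rw [h]) := by
  subst h; simp

theorem stepD {C : Type u} [Category.{v} C] {E : C → Type u'} [∀ A, Category.{v'} (E A)]
    (P : ClovenBifib C E)
    {A B : C} (f : B ⟶ A) {BAB : C} (f₁ f₂ : BAB ⟶ B)
    (hf : f₁ ≫ f = f₂ ≫ f)
    (Δ : B ⟶ BAB) (hΔ₁ : Δ ≫ f₁ = 𝟙 B) (hΔ₂ : Δ ≫ f₂ = 𝟙 B)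
    (W : E A) :
    (P.dIso f₁ Δ hΔ₁).hom.app ((P.pull f).obj W) ≫
      (P.pull Δ).map ((P.chi1 f f₁ f₂ hf).hom.app W) =
    (P.dIso f₂ Δ hΔ₂).hom.app ((P.pull f).obj W) := by
  have a1 := NatTrans.congr_app (P.κ_assoc f f₁ Δ) W
  have a2 := NatTrans.congr_app (P.κ_assoc f f₂ Δ) W
  have il := NatTrans.congr_app (P.κ_id_left f) W
  simp only [NatTrans.comp_app, Functor.comp_obj, Functor.whiskerRight_app, Functor.whiskerLeft_app,
    eqToHom_app] at a1 a2 il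
  rw [← cancel_mono ((P.pull Δ).map ((P.κ f f₂).hom.app W) ≫ (P.κ (f₂ ≫ f) Δ).hom.app W)]
  simp only [dIso, chi1, Iso.trans_hom, eqToIso.hom, Iso.symm_hom, NatTrans.comp_app,
    Functor.map_comp, eqToHom_app, eqToHom_map, Category.assoc]
  -- cancel the f₂-map inv/hom pair on the LHS
  slice_lhs 6 7 => rw [← Functor.map_comp, Iso.inv_hom_id_app, CategoryTheory.Functor.map_id]
  simp only [Category.id_comp]
  rw [a2]
  rw [kappa_congr P hf.symm Δ W]
  rw [kappa_congr2 P hΔ₂ f W]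
  simp only [eqToHom_trans, eqToHom_trans_assoc, eqToHom_refl, Category.id_comp, Category.comp_id, Category.assoc]
  rw [reassoc_of% a1]
  rw [kappa_congr2 P hΔ₁ f W]
  simp only [Iso.inv_hom_id_app_assoc, eqToHom_trans, eqToHom_trans_assoc, eqToHom_refl, Category.id_comp,
    Category.comp_id, Category.assoc]

theorem adj_unit_comp {D₁ : Type*} {D₂ : Type*} [Category D₁] [Category D₂]
    {F : D₁ ⥤ D₂} {G : D₂ ⥤ D₁} (adj : F ⊣ G) {Z : D₁} {W : D₂} (g : Z ⟶ G.obj W) :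
    adj.unit.app Z ≫ G.map (F.map g ≫ adj.counit.app W) = g := by
  simp

theorem keylem {C : Type u} [Category.{v} C] {E : C → Type u'} [∀ A, Category.{v'} (E A)]
    (P : ClovenBifib C E)
    {A B : C} (f : B ⟶ A) {BAB : C} (f₁ f₂ : BAB ⟶ B)
    (hf : f₁ ≫ f = f₂ ≫ f)
    (Δ : B ⟶ BAB) (hΔ₁ : Δ ≫ f₁ = 𝟙 B) (hΔ₂ : Δ ≫ f₂ = 𝟙 B)
    (X : E B) :
    P.eta' f₁ f₂ Δ hΔ₁ hΔ₂ X ≫ (P.BC f₁ f₂ f f hf).app X = (P.adj f).unit.app X := by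
  unfold eta' BC mate
  have hGoalθ : ((P.κ f f₁).hom ≫ eqToHom (by rw [hf]) ≫ (P.κ f f₂).inv :
      P.pull f ⋙ P.pull f₁ ⟶ P.pull f ⋙ P.pull f₂) = (P.chi1 f f₁ f₂ hf).hom := by
    simp [chi1]
  rw [hGoalθ]
  simp only [NatTrans.comp_app, Functor.whiskerRight_app, Functor.whiskerLeft_app, Functor.comp_obj,
    Functor.comp_map, Functor.map_comp, Category.assoc]
  rw [← Functor.map_comp_assoc (P.push f₂)]
  have nA := (P.dIso f₂ Δ hΔ₂).inv.naturality
    ((P.push f₂).map ((P.pull f₁).map ((P.adj f).unit.app X) ≫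
        (P.chi1 f f₁ f₂ hf).hom.app ((P.push f).obj X)) ≫
      (P.adj f₂).counit.app ((P.pull f).obj ((P.push f).obj X)))
  simp only [Functor.id_map, Functor.id_obj, Functor.comp_map, Functor.comp_obj] at nA
  rw [← nA]
  rw [← Functor.map_comp_assoc (P.pull Δ)]
  rw [adj_unit_comp (P.adj f₂)]
  rw [Functor.map_comp (P.pull Δ)]
  have nC := (P.dIso f₁ Δ hΔ₁).hom.naturality ((P.adj f).unit.app X)
  simp only [Functor.id_map, Functor.id_obj, Functor.comp_map, Functor.comp_obj] at nC
  simp only [Category.assoc]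
  rw [← reassoc_of% nC]
  rw [reassoc_of% (stepD P f f₁ f₂ hf Δ hΔ₁ hΔ₂ ((P.push f).obj X))]
  simp

/-- Assume the Beck–Chevalley property. If `(X, β)` is an action
of `Eq(f)` on `p`, then `α := β ∘ (BC₁⁻¹)_X` satisfies the algebra unit axiom
(TA1): `α ∘ (η_f)_X = id_X`. -/
theorem benabou_roubaud_alpha_TA1
    {C : Type u} [Category.{v} C] [Limits.HasPullbacks C]
    {E : C → Type u'} [∀ A, Category.{v'} (E A)] (P : ClovenBifib C E)
    (hBC : P.BCCond)
    {A B : C} (f : B ⟶ A) {BAB : C} (f₁ f₂ : BAB ⟶ B)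
    (hf : f₁ ≫ f = f₂ ≫ f) (hkp : IsPullback f₁ f₂ f f)
    (Δ : B ⟶ BAB) (hΔ₁ : Δ ≫ f₁ = 𝟙 B) (hΔ₂ : Δ ≫ f₂ = 𝟙 B)
    {Q : C} (π₁ π₂ : Q ⟶ BAB) (hππ : π₂ ≫ f₂ = π₁ ≫ f₁) (hpbQ : IsPullback π₂ π₁ f₂ f₁)
    (π : Q ⟶ BAB) (hπ₁ : π ≫ f₁ = π₂ ≫ f₁) (hπ₂ : π ≫ f₂ = π₁ ≫ f₂)
    (X : E B) (β : (P.push f₂).obj ((P.pull f₁).obj X) ⟶ X)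
    (hAC1 : P.eta' f₁ f₂ Δ hΔ₁ hΔ₂ X ≫ β = 𝟙 X)
    (hAC2 : P.mu' f₁ f₂ π₁ π₂ π hππ hπ₁ hπ₂ (hBC π₂ π₁ f₂ f₁ hππ hpbQ) X ≫ β =
      (P.push f₂).map ((P.pull f₁).map β) ≫ β) :
    (P.adj f).unit.app X ≫
        ((P.BCinv f₁ f₂ f f hf (hBC f₁ f₂ f f hf hkp)).app X ≫ β) = 𝟙 X := by
  haveI := hBC f₁ f₂ f f hf hkp
  have h2 : (P.adj f).unit.app X ≫
      (P.BCinv f₁ f₂ f f hf (hBC f₁ f₂ f f hf hkp)).app X =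
      P.eta' f₁ f₂ Δ hΔ₁ hΔ₂ X := by
    rw [← keylem P f f₁ f₂ hf Δ hΔ₁ hΔ₂ X, BCinv, Category.assoc, ← NatTrans.comp_app,
      IsIso.hom_inv_id]
    simp
  rw [← Category.assoc, h2, hAC1]
end
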